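/- arXiv:1808.09583 — 2 statements merged into one kernel-verified Lean document; each statement's English description precedes it below -/
import Mathlib

section
/- Let $n\ge 2$, $\alpha\in(0,n)$, and $j\in\mathbb{N}$. Then there exists a set $A_j\subset\{0,1,\dots,2^j-1\}^n$ of cardinality $\lfloor 2^{j\alpha}\rfloor$ and a constant $\widetilde C\ge 1$ depending only on $n$ and $\alpha$ (independent of $j$) such that for every $J\in\{0,\dots,j\}$: (i) $\lfloor 2^{(j-J)\alpha}\rfloor \le |\{m\in A_j:\ Q_{j,m}\subset Q_{J,0}\}| \le \widetilde C\,2^{(j-J)\alpha}$, and (ii) for every $K\in\{0,\dots,2^J-1\}^n$, $|\{m\in A_j:\ Q_{j,m}\subset Q_{J,K}\}| \le 2\,|\{m\in A_j:\ Q_{j,m}\subset Q_{J,0}\}|$. -/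
def dyadicCube (n : ℕ) (j : ℕ) (m : Fin n → ℤ) : Set (Fin n → ℝ) :=
  {x | ∀ i, (m i : ℝ) ≤ 2 ^ j * x i ∧ 2 ^ j * x i < m i + 1}

namespace Stmt2Aux

open Finset

noncomputable def Pf (α : ℝ) : ℕ → ℕ
  | 0 => 1
  | t + 1 => Pf α t * ⌈(2:ℝ) ^ ((((t:ℕ):ℝ) + 1) * α) / (Pf α t : ℝ)⌉₊

noncomputable def cf (α : ℝ) (t : ℕ) : ℕ :=
  ⌈(2:ℝ) ^ ((((t:ℕ):ℝ) + 1) * α) / (Pf α t : ℝ)⌉₊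

lemma Pf_succ (α : ℝ) (t : ℕ) : Pf α (t+1) = Pf α t * cf α t := rfl

lemma Pf_pos (α : ℝ) (t : ℕ) : 0 < Pf α t := by
  induction t with
  | zero => simp [Pf]
  | succ t ih =>
    have h2 : (0:ℝ) < (2:ℝ) ^ ((((t:ℕ):ℝ) + 1) * α) / (Pf α t : ℝ) := by
      apply div_pos (Real.rpow_pos_of_pos two_pos _)
      exact_mod_cast ih
    exact Nat.mul_pos ih (Nat.ceil_pos.mpr h2)

lemma cf_pos (α : ℝ) (t : ℕ) : 0 < cf α t := by
  apply Nat.ceil_pos.mpr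
  apply div_pos (Real.rpow_pos_of_pos two_pos _)
  exact_mod_cast Pf_pos α t

lemma Pf_ge (α : ℝ) (t : ℕ) : (2:ℝ) ^ ((t:ℝ) * α) ≤ (Pf α t : ℝ) := by
  cases t with
  | zero => norm_num [show Pf α 0 = 1 from rfl]
  | succ t =>
    have hp : (0:ℝ) < (Pf α t : ℝ) := by exact_mod_cast Pf_pos α t
    have h1 : (2:ℝ) ^ ((((t:ℕ):ℝ) + 1) * α)
        = (Pf α t : ℝ) * ((2:ℝ) ^ ((((t:ℕ):ℝ) + 1) * α) / (Pf α t : ℝ)) := by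
      field_simp
    calc (2:ℝ) ^ (((t+1:ℕ):ℝ) * α)
        = (Pf α t : ℝ) * ((2:ℝ) ^ ((((t:ℕ):ℝ) + 1) * α) / (Pf α t : ℝ)) := by
          rw [← h1]; push_cast; ring_nf
      _ ≤ (Pf α t : ℝ) * (⌈(2:ℝ) ^ ((((t:ℕ):ℝ) + 1) * α) / (Pf α t : ℝ)⌉₊ : ℝ) := by
          gcongr; exact Nat.le_ceil _
      _ = (Pf α (t+1) : ℝ) := by rw [Pf]; push_cast; ring

lemma Pf_le (α : ℝ) (hα : 0 ≤ α) (t : ℕ) : (Pf α t : ℝ) ≤ 2 * (2:ℝ) ^ ((t:ℝ) * α) := by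
  induction t with
  | zero => norm_num [Pf]
  | succ t ih =>
    set x := (2:ℝ) ^ ((((t:ℕ):ℝ) + 1) * α) / (Pf α t : ℝ) with hx
    have hp : (0:ℝ) < (Pf α t : ℝ) := by exact_mod_cast Pf_pos α t
    have hx0 : 0 ≤ x := le_of_lt (div_pos (Real.rpow_pos_of_pos two_pos _) hp)
    have hPf : (Pf α (t+1) : ℝ) = (Pf α t : ℝ) * (⌈x⌉₊ : ℝ) := by
      rw [Pf]; push_cast; ring
    have hexp : ((t:ℝ)) * α ≤ ((t:ℝ) + 1) * α := by nlinarith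
    have hmono : (2:ℝ) ^ ((t:ℝ) * α) ≤ (2:ℝ) ^ (((t:ℝ) + 1) * α) :=
      Real.rpow_le_rpow_of_exponent_le one_le_two hexp
    rcases le_or_gt x 1 with hx1 | hx1
    · have hceil : (⌈x⌉₊ : ℝ) ≤ 1 := by
        have : ⌈x⌉₊ ≤ 1 := Nat.ceil_le.mpr (by simpa using hx1)
        exact_mod_cast this
      have : (Pf α (t+1) : ℝ) ≤ (Pf α t : ℝ) := by
        rw [hPf]; nlinarith
      calc (Pf α (t+1) : ℝ) ≤ (Pf α t : ℝ) := this
        _ ≤ 2 * (2:ℝ) ^ ((t:ℝ) * α) := ih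
        _ ≤ 2 * (2:ℝ) ^ (((t+1:ℕ):ℝ) * α) := by push_cast; nlinarith
    · have hceil : (⌈x⌉₊ : ℝ) < x + 1 := Nat.ceil_lt_add_one hx0
      have h2x : (⌈x⌉₊ : ℝ) ≤ 2 * x := by nlinarith
      have : (Pf α (t+1) : ℝ) ≤ (Pf α t : ℝ) * (2 * x) := by
        rw [hPf]; nlinarith
      calc (Pf α (t+1) : ℝ) ≤ (Pf α t : ℝ) * (2 * x) := this
        _ = 2 * (2:ℝ) ^ ((((t:ℕ):ℝ) + 1) * α) := by rw [hx]; field_simp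
        _ = 2 * (2:ℝ) ^ (((t+1:ℕ):ℝ) * α) := by push_cast; ring_nf

lemma cf_le (n : ℕ) (α : ℝ) (hα : 0 ≤ α) (hαn : α ≤ n) (t : ℕ) : cf α t ≤ 2 ^ n := by
  apply Nat.ceil_le.mpr
  have hp : (0:ℝ) < (Pf α t : ℝ) := by exact_mod_cast Pf_pos α t
  have h1 : (2:ℝ) ^ ((((t:ℕ):ℝ) + 1) * α) / (Pf α t : ℝ)
      ≤ (2:ℝ) ^ ((((t:ℕ):ℝ) + 1) * α) / (2:ℝ) ^ ((t:ℝ) * α) := by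
    exact div_le_div_of_nonneg_left (le_of_lt (Real.rpow_pos_of_pos two_pos _))
      (Real.rpow_pos_of_pos two_pos _) (Pf_ge α t)
  have h2 : (2:ℝ) ^ ((((t:ℕ):ℝ) + 1) * α) / (2:ℝ) ^ ((t:ℝ) * α) = (2:ℝ) ^ α := by
    rw [← Real.rpow_sub two_pos]; ring_nf
  have h3 : (2:ℝ) ^ α ≤ ((2:ℕ) ^ n : ℝ) := by
    push_cast
    rw [← Real.rpow_natCast 2 n]
    exact Real.rpow_le_rpow_of_exponent_le one_le_two hαn
  calc (2:ℝ) ^ ((((t:ℕ):ℝ) + 1) * α) / (Pf α t : ℝ)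
      ≤ (2:ℝ) ^ α := h1.trans_eq h2
    _ ≤ ((2 ^ n : ℕ) : ℝ) := by push_cast; exact_mod_cast h3

lemma Pf_mono (α : ℝ) : Monotone (Pf α) := by
  apply monotone_nat_of_le_succ
  intro t
  rw [Pf_succ]
  exact Nat.le_mul_of_pos_right _ (cf_pos α t)

def bitv (n : ℕ) (r : ℕ) : Fin n → ℤ := fun i => if r.testBit i then 1 else 0

lemma bitv_zero (n : ℕ) : bitv n 0 = 0 := funext fun i => by simp [bitv]

lemma bitv_mem (n r : ℕ) (i : Fin n) : bitv n r i = 0 ∨ bitv n r i = 1 := by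
  unfold bitv; split <;> simp

lemma bitv_inj {n r r' : ℕ} (hr : r < 2 ^ n) (hr' : r' < 2 ^ n)
    (h : ∀ i : Fin n, bitv n r i = bitv n r' i) : r = r' := by
  apply Nat.eq_of_testBit_eq
  intro i
  by_cases hi : i < n
  · have := h ⟨i, hi⟩
    unfold bitv at this
    rcases Bool.eq_false_or_eq_true (r.testBit i) with h1 | h1 <;>
      rcases Bool.eq_false_or_eq_true (r'.testBit i) with h2 | h2 <;>
        simp [h1, h2] at this ⊢
  · have h1 : r < 2 ^ i := lt_of_lt_of_le hr (Nat.pow_le_pow_right (by norm_num) (le_of_not_gt hi))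
    have h2 : r' < 2 ^ i := lt_of_lt_of_le hr' (Nat.pow_le_pow_right (by norm_num) (le_of_not_gt hi))
    rw [Nat.testBit_eq_false_of_lt h1, Nat.testBit_eq_false_of_lt h2]

noncomputable def B (n : ℕ) (α : ℝ) : ℕ → Finset (Fin n → ℤ)
  | 0 => {0}
  | s + 1 => ((B n α s) ×ˢ Finset.range (cf α s)).image
      fun p => p.1 + fun i => (2:ℤ) ^ s * bitv n p.2 i

lemma B_zero (n : ℕ) (α : ℝ) : B n α 0 = {0} := rfl

lemma mem_B_succ {n : ℕ} {α : ℝ} {s : ℕ} {m : Fin n → ℤ} :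
    m ∈ B n α (s+1) ↔ ∃ m0 ∈ B n α s, ∃ r < cf α s,
      m = m0 + fun i => (2:ℤ) ^ s * bitv n r i := by
  constructor
  · intro hm
    obtain ⟨p, hp, he⟩ := Finset.mem_image.mp hm
    obtain ⟨h1, h2⟩ := Finset.mem_product.mp hp
    exact ⟨p.1, h1, p.2, Finset.mem_range.mp h2, he.symm⟩
  · rintro ⟨m0, h1, r, h2, rfl⟩
    exact Finset.mem_image.mpr ⟨(m0, r),
      Finset.mem_product.mpr ⟨h1, Finset.mem_range.mpr h2⟩, rfl⟩

lemma B_box {n : ℕ} {α : ℝ} {s : ℕ} {m : Fin n → ℤ} (h : m ∈ B n α s) (i : Fin n) :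
    0 ≤ m i ∧ m i < 2 ^ s := by
  induction s generalizing m with
  | zero =>
    rw [B_zero, Finset.mem_singleton] at h
    subst h; simp
  | succ s ih =>
    obtain ⟨m0, h1, r, h2, rfl⟩ := mem_B_succ.mp h
    have hb := ih h1
    have h2s : (0:ℤ) < 2 ^ s := by positivity
    have hpow : (2:ℤ) ^ (s+1) = 2 ^ s * 2 := pow_succ 2 s
    rcases bitv_mem n r i with hv | hv <;>
      · simp only [Pi.add_apply, hv] at *
        constructor <;> omega

lemma zero_mem_B (n : ℕ) (α : ℝ) (s : ℕ) : (0 : Fin n → ℤ) ∈ B n α s := by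
  induction s with
  | zero => rw [B_zero]; exact Finset.mem_singleton_self 0
  | succ s ih =>
    refine mem_B_succ.mpr ⟨0, ih, 0, cf_pos α s, ?_⟩
    funext i; simp [bitv_zero]

lemma B_subset_succ (n : ℕ) (α : ℝ) (s : ℕ) : B n α s ⊆ B n α (s+1) := by
  intro m hm
  refine mem_B_succ.mpr ⟨m, hm, 0, cf_pos α s, ?_⟩
  funext i; simp [bitv_zero]

lemma B_mono (n : ℕ) (α : ℝ) : Monotone (B n α) :=
  monotone_nat_of_le_succ (B_subset_succ n α)

lemma B_card (n : ℕ) (α : ℝ) (hα : 0 ≤ α) (hαn : α ≤ n) (s : ℕ) :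
    (B n α s).card = Pf α s := by
  induction s with
  | zero => rw [B_zero]; rfl
  | succ s ih =>
    show (Finset.image _ _).card = _
    rw [Finset.card_image_of_injOn, Finset.card_product, Finset.card_range, ih, Pf_succ]
    rintro ⟨m, r⟩ hp ⟨m', r'⟩ hp' he
    simp only [Finset.mem_coe, Finset.mem_product, Finset.mem_range] at hp hp'
    obtain ⟨hm, hr⟩ := hp
    obtain ⟨hm', hr'⟩ := hp'
    have key : ∀ i : Fin n, m i = m' i ∧ bitv n r i = bitv n r' i := by
      intro i
      have he' : m i + 2 ^ s * bitv n r i = m' i + 2 ^ s * bitv n r' i := by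
        simpa using congrFun he i
      have b1 := (B_box hm i); have b2 := (B_box hm' i)
      have h2s : (0:ℤ) < 2 ^ s := by positivity
      rcases bitv_mem n r i with hv | hv <;> rcases bitv_mem n r' i with hv' | hv' <;>
        · rw [hv, hv'] at he' ⊢
          constructor <;> omega
    have hrlt : r < 2 ^ n := lt_of_lt_of_le hr (cf_le n α hα hαn s)
    have hrlt' : r' < 2 ^ n := lt_of_lt_of_le hr' (cf_le n α hα hαn s)
    have e1 : m = m' := funext fun i => (key i).1
    have e2 : r = r' := bitv_inj hrlt hrlt' fun i => (key i).2
    simp [e1, e2]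

lemma B_shrink {n : ℕ} {α : ℝ} {t s : ℕ} (ht : t ≤ s) {m : Fin n → ℤ}
    (h : m ∈ B n α s) (hm : ∀ i, m i < 2 ^ t) : m ∈ B n α t := by
  induction s with
  | zero => exact (Nat.le_zero.mp ht) ▸ h
  | succ s ih =>
    rcases Nat.lt_or_ge t (s+1) with hts | hts
    · have hts' : t ≤ s := Nat.lt_succ_iff.mp hts
      obtain ⟨m0, h1, r, h2, he⟩ := mem_B_succ.mp h
      have hbz : ∀ i, bitv n r i = 0 := by
        intro i
        have hb := B_box h1 i
        have hmi := hm i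
        have hle : (2:ℤ) ^ t ≤ 2 ^ s := pow_le_pow_right₀ (by norm_num) hts'
        rcases bitv_mem n r i with hv | hv
        · exact hv
        · exfalso
          rw [he] at hmi
          simp only [Pi.add_apply, hv, mul_one] at hmi
          omega
      have he0 : m = m0 := by
        rw [he]; funext i
        simp [hbz i]
      exact ih hts' (he0 ▸ h1)
    · have : t = s + 1 := le_antisymm (by omega) hts
      exact this ▸ h

def pred (n t : ℕ) (K : Fin n → ℤ) (m : Fin n → ℤ) : Prop :=
  ∀ i, K i * 2 ^ t ≤ m i ∧ m i + 1 ≤ (K i + 1) * 2 ^ t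

instance (n t : ℕ) (K : Fin n → ℤ) : DecidablePred (pred n t K) := fun m => by
  unfold pred; infer_instance

lemma B_filter_corner (n : ℕ) (α : ℝ) {t s : ℕ} (ht : t ≤ s) :
    (B n α s).filter (pred n t 0) = B n α t := by
  ext m
  simp only [Finset.mem_filter]
  constructor
  · rintro ⟨h1, h2⟩
    refine B_shrink ht h1 fun i => ?_
    have h3 := (h2 i).2
    simp only [Pi.zero_apply, zero_add, one_mul] at h3
    omega
  · intro h
    refine ⟨B_mono n α ht h, fun i => ?_⟩
    have hb := B_box h i
    simp only [Pi.zero_apply, zero_mul, zero_add, one_mul]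
    omega

lemma B_filter_le (n : ℕ) (α : ℝ) (hα : 0 ≤ α) (hαn : α ≤ n) {t s : ℕ} (ht : t ≤ s)
    (K : Fin n → ℤ) : ((B n α s).filter (pred n t K)).card ≤ Pf α t := by
  induction s, ht using Nat.le_induction generalizing K with
  | base =>
    rw [← B_card n α hα hαn t]
    exact Finset.card_filter_le _ _
  | succ s hts ih =>
    have hkey : (2:ℤ) ^ s = 2 ^ (s - t) * 2 ^ t := by
      rw [← pow_add, Nat.sub_add_cancel hts]
    have h2t : (0:ℤ) < 2 ^ t := by positivity
    refine le_trans (Finset.card_le_card_of_injOn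
      (fun m => m - fun i => (2:ℤ) ^ s * (if (2:ℤ) ^ (s - t) ≤ K i then 1 else 0))
      ?_ ?_) (ih (fun i => K i - 2 ^ (s - t) * (if (2:ℤ) ^ (s - t) ≤ K i then 1 else 0)))
    · intro m hm
      rw [Finset.mem_coe, Finset.mem_filter] at hm
      obtain ⟨hmB, hmp⟩ := hm
      obtain ⟨m0, h0, r, hr, rfl⟩ := mem_B_succ.mp hmB
      have hbit : ∀ i : Fin n, (2:ℤ) ^ s * bitv n r i
          = (2:ℤ) ^ s * (if (2:ℤ) ^ (s - t) ≤ K i then 1 else 0) := by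
        intro i
        obtain ⟨hp1, hp2⟩ := hmp i
        simp only [Pi.add_apply] at hp1 hp2
        obtain ⟨hb0, hb1⟩ := B_box h0 i
        split_ifs with hKi
        · rcases bitv_mem n r i with hv | hv
          · exfalso
            rw [hv, mul_zero, add_zero] at hp1
            have hmul : (2:ℤ) ^ (s - t) * 2 ^ t ≤ K i * 2 ^ t :=
              mul_le_mul_of_nonneg_right hKi (le_of_lt h2t)
            linarith
          · rw [hv]
        · rcases bitv_mem n r i with hv | hv
          · rw [hv]
          · exfalso
            rw [hv, mul_one] at hp2
            have hKi' : K i + 1 ≤ 2 ^ (s - t) := Int.add_one_le_iff.mpr (lt_of_not_ge hKi)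
            have hmul : (K i + 1) * 2 ^ t ≤ (2:ℤ) ^ (s - t) * 2 ^ t :=
              mul_le_mul_of_nonneg_right hKi' (le_of_lt h2t)
            linarith
      rw [Finset.mem_coe, Finset.mem_filter]
      beta_reduce
      have heq : ((m0 + fun i => (2:ℤ) ^ s * bitv n r i)
          - fun i => (2:ℤ) ^ s * (if (2:ℤ) ^ (s - t) ≤ K i then 1 else 0)) = m0 := by
        funext i
        simp only [Pi.add_apply, Pi.sub_apply]
        rw [← hbit i]; ring
      rw [heq]
      refine ⟨h0, fun i => ?_⟩
      obtain ⟨hp1, hp2⟩ := hmp i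
      simp only [Pi.add_apply] at hp1 hp2
      have expand1 : (K i - 2 ^ (s - t) * (if (2:ℤ) ^ (s - t) ≤ K i then 1 else 0)) * 2 ^ t
          = K i * 2 ^ t - 2 ^ s * (if (2:ℤ) ^ (s - t) ≤ K i then 1 else 0) := by
        rw [hkey]; ring
      have expand2 : (K i - 2 ^ (s - t) * (if (2:ℤ) ^ (s - t) ≤ K i then 1 else 0) + 1) * 2 ^ t
          = (K i + 1) * 2 ^ t - 2 ^ s * (if (2:ℤ) ^ (s - t) ≤ K i then 1 else 0) := by
        rw [hkey]; ring
      constructor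
      · rw [expand1, ← hbit i]; linarith
      · rw [expand2, ← hbit i]; linarith
    · intro m hm m' hm' he
      funext i
      have hei := congrFun he i
      simp only [Pi.sub_apply] at hei
      linarith [hei]

noncomputable def pick {X : Type*} (s : Finset X) (k : ℕ) : Finset X :=
  (Finset.exists_subset_card_eq (min_le_right k s.card)).choose

lemma pick_spec {X : Type*} (s : Finset X) (k : ℕ) :
    pick s k ⊆ s ∧ (pick s k).card = min k s.card :=
  (Finset.exists_subset_card_eq (min_le_right k s.card)).choose_spec

noncomputable def Cs (n : ℕ) (α : ℝ) (N : ℕ) : ℕ → Finset (Fin n → ℤ)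
  | 0 => {0}
  | s + 1 => Cs n α N s ∪
      pick (B n α (s+1) \ B n α s) (min N (Pf α (s+1)) - min N (Pf α s))

lemma Cs_subset_B (n : ℕ) (α : ℝ) (N : ℕ) (s : ℕ) : Cs n α N s ⊆ B n α s := by
  induction s with
  | zero => exact fun _ h => h
  | succ s ih =>
    apply Finset.union_subset (ih.trans (B_subset_succ n α s))
    exact (pick_spec _ _).1.trans Finset.sdiff_subset

lemma Cs_card (n : ℕ) (α : ℝ) (N : ℕ) (hα : 0 ≤ α) (hαn : α ≤ n) (hN : 1 ≤ N) (s : ℕ) :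
    (Cs n α N s).card = min N (Pf α s) := by
  induction s with
  | zero =>
    have h0 : Pf α 0 = 1 := rfl
    show ({0} : Finset (Fin n → ℤ)).card = min N (Pf α 0)
    rw [Finset.card_singleton, h0]
    omega
  | succ s ih =>
    have hdisj : Disjoint (Cs n α N s)
        (pick (B n α (s+1) \ B n α s) (min N (Pf α (s+1)) - min N (Pf α s))) := by
      apply Finset.disjoint_left.mpr
      intro a ha hb
      have h1 : a ∈ B n α s := Cs_subset_B n α N s ha
      have h2 := (pick_spec _ _).1 hb
      exact (Finset.mem_sdiff.mp h2).2 h1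
    rw [Cs, Finset.card_union_of_disjoint hdisj, ih]
    have hcard : (B n α (s+1) \ B n α s).card = Pf α (s+1) - Pf α s := by
      rw [Finset.card_sdiff_of_subset (B_subset_succ n α s), B_card n α hα hαn, B_card n α hα hαn]
    have hmono : Pf α s ≤ Pf α (s+1) := Pf_mono α (Nat.le_succ s)
    have hpk := (pick_spec (B n α (s+1) \ B n α s) (min N (Pf α (s+1)) - min N (Pf α s))).2
    rw [hcard] at hpk
    omega

lemma Cs_filter (n : ℕ) (α : ℝ) (N : ℕ) {t s : ℕ} (ht : t ≤ s) :
    (Cs n α N s).filter (pred n t 0) = Cs n α N t := by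
  induction s, ht using Nat.le_induction with
  | base =>
    apply Finset.filter_eq_self.mpr
    intro m hm i
    have hb := B_box (Cs_subset_B n α N t hm) i
    simp only [Pi.zero_apply, zero_mul, zero_add, one_mul]
    omega
  | succ s hts ih =>
    rw [Cs, Finset.filter_union, ih]
    have hemp : (pick (B n α (s+1) \ B n α s)
        (min N (Pf α (s+1)) - min N (Pf α s))).filter (pred n t 0) = ∅ := by
      apply Finset.filter_eq_empty_iff.mpr
      intro m hm hp
      have h2 := Finset.mem_sdiff.mp ((pick_spec _ _).1 hm)
      apply h2.2
      have hle : (2:ℤ) ^ t ≤ 2 ^ s := pow_le_pow_right₀ (by norm_num) hts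
      refine B_shrink (Nat.le_succ s) h2.1 fun i => ?_
      have h3 := (hp i).2
      simp only [Pi.zero_apply, zero_add, one_mul] at h3
      omega
    rw [hemp, Finset.union_empty]

lemma cube_subset_iff (n j J : ℕ) (hJ : J ≤ j) (m K : Fin n → ℤ) :
    dyadicCube n j m ⊆ dyadicCube n J K ↔ pred n (j - J) K m := by
  have hpow : (2:ℝ) ^ j = 2 ^ J * 2 ^ (j - J) := by
    rw [← pow_add, Nat.add_sub_cancel' hJ]
  have hc : (0:ℝ) < 2 ^ (j - J) := by positivity
  constructor
  · intro h i
    have hx : (fun i => (m i : ℝ) / 2 ^ j) ∈ dyadicCube n j m := by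
      simp only [dyadicCube, Set.mem_setOf_eq]
      intro i'
      have he : (2:ℝ) ^ j * ((m i' : ℝ) / 2 ^ j) = (m i' : ℝ) := by field_simp
      rw [he]
      exact ⟨le_refl _, by linarith⟩
    have h2 := h hx i
    change (K i : ℝ) ≤ 2 ^ J * ((m i : ℝ) / 2 ^ j) ∧ 2 ^ J * ((m i : ℝ) / 2 ^ j) < K i + 1 at h2
    have he : (2:ℝ) ^ J * ((m i : ℝ) / 2 ^ j) = (m i : ℝ) / 2 ^ (j - J) := by
      rw [hpow]; field_simp
    obtain ⟨h3, h4⟩ := h2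
    rw [he] at h3 h4
    constructor
    · have h5 : (K i : ℝ) * 2 ^ (j - J) ≤ (m i : ℝ) := (le_div_iff₀ hc).mp h3
      exact_mod_cast h5
    · have h5 : (m i : ℝ) < ((K i : ℝ) + 1) * 2 ^ (j - J) := (div_lt_iff₀ hc).mp h4
      have h6 : m i < (K i + 1) * 2 ^ (j - J) := by exact_mod_cast h5
      exact Int.add_one_le_iff.mpr h6
  · intro h x hx i
    obtain ⟨ha, hb⟩ := h i
    have h1 := (hx i).1
    have h2 := (hx i).2
    have ha' : (K i : ℝ) * 2 ^ (j - J) ≤ (m i : ℝ) := by exact_mod_cast ha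
    have hb' : (m i : ℝ) + 1 ≤ ((K i : ℝ) + 1) * 2 ^ (j - J) := by exact_mod_cast hb
    have e : (2:ℝ) ^ j * x i = (2 ^ J * x i) * 2 ^ (j - J) := by rw [hpow]; ring
    rw [e] at h1 h2
    constructor
    · exact le_of_mul_le_mul_right (by linarith) hc
    · have hlt : ((2:ℝ) ^ J * x i) * 2 ^ (j - J) < ((K i : ℝ) + 1) * 2 ^ (j - J) := by linarith
      exact lt_of_mul_lt_mul_right hlt (le_of_lt hc)

end Stmt2Aux

open Stmt2Aux

theorem stmt_2 (n : ℕ) (hn : 2 ≤ n) (α : ℝ) (hα0 : 0 < α) (hαn : α < n) :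
    ∃ Ctil : ℝ, 1 ≤ Ctil ∧ ∀ j : ℕ, ∃ A : Finset (Fin n → ℤ),
      (∀ m ∈ A, ∀ i, 0 ≤ m i ∧ m i < 2 ^ j) ∧
      A.card = ⌊(2 : ℝ) ^ ((j : ℝ) * α)⌋₊ ∧
      ∀ J : ℕ, J ≤ j →
        ((⌊(2 : ℝ) ^ (((j : ℝ) - (J : ℝ)) * α)⌋₊ : ℝ) ≤
            ({m | m ∈ A ∧ dyadicCube n j m ⊆ dyadicCube n J 0}.ncard : ℝ) ∧
          ({m | m ∈ A ∧ dyadicCube n j m ⊆ dyadicCube n J 0}.ncard : ℝ) ≤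
            Ctil * (2 : ℝ) ^ (((j : ℝ) - (J : ℝ)) * α)) ∧
        ∀ K : Fin n → ℤ, (∀ i, 0 ≤ K i ∧ K i < 2 ^ J) →
          ({m | m ∈ A ∧ dyadicCube n j m ⊆ dyadicCube n J K}.ncard : ℝ) ≤
            2 * ({m | m ∈ A ∧ dyadicCube n j m ⊆ dyadicCube n J 0}.ncard : ℝ) := by
  have hα0' : 0 ≤ α := le_of_lt hα0
  have hαn' : α ≤ (n : ℝ) := le_of_lt hαn
  refine ⟨2, one_le_two, fun j => ?_⟩
  set N := ⌊(2:ℝ) ^ ((j:ℝ) * α)⌋₊ with hNdef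
  have hN1 : 1 ≤ N := by
    apply Nat.le_floor
    rw [Nat.cast_one]
    calc (1:ℝ) = 2 ^ (0:ℝ) := by rw [Real.rpow_zero]
      _ ≤ 2 ^ ((j:ℝ) * α) := Real.rpow_le_rpow_of_exponent_le one_le_two (by positivity)
  have hNP : N ≤ Pf α j := by
    have h2 : N ≤ ⌊(Pf α j : ℝ)⌋₊ := Nat.floor_le_floor (Pf_ge α j)
    rwa [Nat.floor_natCast] at h2
  refine ⟨Cs n α N j, ?_, ?_, ?_⟩
  · intro m hm i
    exact B_box (Cs_subset_B n α N j hm) i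
  · rw [Cs_card n α N hα0' hαn' hN1 j]
    omega
  · intro J hJ
    have ht : j - J ≤ j := Nat.sub_le j J
    have hcast : ((j:ℝ) - (J:ℝ)) = ((j - J : ℕ) : ℝ) := by
      rw [Nat.cast_sub hJ]
    have hset0 : {m | m ∈ Cs n α N j ∧ dyadicCube n j m ⊆ dyadicCube n J 0}
        = ↑((Cs n α N j).filter (pred n (j - J) 0)) := by
      ext m
      simp only [Set.mem_setOf_eq, Finset.coe_filter,
        cube_subset_iff n j J hJ m 0]
    have hcount0 : {m | m ∈ Cs n α N j ∧ dyadicCube n j m ⊆ dyadicCube n J 0}.ncard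
        = min N (Pf α (j - J)) := by
      rw [hset0, Set.ncard_coe_finset, Cs_filter n α N ht, Cs_card n α N hα0' hαn' hN1]
    refine ⟨⟨?_, ?_⟩, ?_⟩
    · rw [hcount0]
      have hfl : ⌊(2:ℝ) ^ (((j:ℝ) - (J:ℝ)) * α)⌋₊ ≤ min N (Pf α (j - J)) := by
        rw [hcast]
        apply le_min
        · apply Nat.floor_le_floor
          apply Real.rpow_le_rpow_of_exponent_le one_le_two
          apply mul_le_mul_of_nonneg_right _ hα0'
          exact_mod_cast ht
        · calc ⌊(2:ℝ) ^ (((j - J : ℕ):ℝ) * α)⌋₊ ≤ ⌊(Pf α (j - J) : ℝ)⌋₊ :=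
              Nat.floor_le_floor (Pf_ge α (j - J))
            _ = Pf α (j - J) := Nat.floor_natCast _
      exact_mod_cast hfl
    · rw [hcount0, hcast]
      calc ((min N (Pf α (j - J)) : ℕ) : ℝ) ≤ (Pf α (j - J) : ℝ) := by
            exact_mod_cast min_le_right N (Pf α (j - J))
        _ ≤ 2 * (2:ℝ) ^ (((j - J : ℕ):ℝ) * α) := Pf_le α hα0' (j - J)
    · intro K _
      have hsetK : {m | m ∈ Cs n α N j ∧ dyadicCube n j m ⊆ dyadicCube n J K}
          = ↑((Cs n α N j).filter (pred n (j - J) K)) := by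
        ext m
        simp only [Set.mem_setOf_eq, Finset.coe_filter,
          cube_subset_iff n j J hJ m K]
      rw [hsetK, Set.ncard_coe_finset, hcount0]
      have h1 : ((Cs n α N j).filter (pred n (j - J) K)).card ≤ min N (Pf α (j - J)) := by
        apply le_min
        · calc ((Cs n α N j).filter (pred n (j - J) K)).card ≤ (Cs n α N j).card :=
              Finset.card_filter_le _ _
            _ = min N (Pf α j) := Cs_card n α N hα0' hαn' hN1 j
            _ ≤ N := min_le_left _ _
        · calc ((Cs n α N j).filter (pred n (j - J) K)).card
              ≤ ((B n α j).filter (pred n (j - J) K)).card :=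
              Finset.card_le_card (Finset.filter_subset_filter _ (Cs_subset_B n α N j))
            _ ≤ Pf α (j - J) := B_filter_le n α hα0' hαn' ht K
      have h1' : (((Cs n α N j).filter (pred n (j - J) K)).card : ℝ)
          ≤ ((min N (Pf α (j - J)) : ℕ) : ℝ) := by exact_mod_cast h1
      have h2 : (0:ℝ) ≤ ((min N (Pf α (j - J)) : ℕ) : ℝ) := Nat.cast_nonneg _
      linarith
end

section
/- Let $n\ge 2$, $\alpha\in(0,n-1)$, $q\in(0,\infty]$, $p\in(0,\infty]$, $s\in\mathbb{R}$, and suppose for each level $j\in\{j_1,\dots,N\}$ we select exactly $M_j$ dyadic cubes inside $Q_{J,0}$ with $c\,2^{(j-J)\alpha}\le M_{j,J}\le C\,2^{(j-J)\alpha}$ for all $J\le j$ (where $M_{j,J}$ counts selected level-$j$ cubes inside $Q_{J,0}$). Then the sequence quasi-norm $\sup_{J\in\{j_1,\dots,N\}}2^{Jn\tau}\Big(\sum_{j=J}^N 2^{j(s+n/2-n/p)q}\lambda_j^q M_{j,J}^{q/p}\Big)^{1/q}$ with $\tau=\alpha/(np)$ satisfies, uniformly in $N$ and $\{\lambda_j\}$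 (nonnegative), the two-sided bound $\asymp\Big(\sum_{j=j_1}^N 2^{j(s+n/2+n\tau-n/p)q}\lambda_j^q\Big)^{1/q}$. -/
open scoped ENNReal

/-- `(∑_{j=J}^N t_j^q)^{1/q}`, with the `sup` interpretation when `q = ∞`. -/
noncomputable def lqTail (q : ℝ≥0∞) (t : ℕ → ℝ≥0∞) (J N : ℕ) : ℝ≥0∞ :=
  if q = ⊤ then ⨆ j ∈ Finset.Icc J N, t j
  else (∑ j ∈ Finset.Icc J N, t j ^ q.toReal) ^ (1 / q.toReal)

lemma lqTail_mono_fun (q : ℝ≥0∞) {f g : ℕ → ℝ≥0∞} {J N : ℕ}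
    (h : ∀ j ∈ Finset.Icc J N, f j ≤ g j) : lqTail q f J N ≤ lqTail q g J N := by
  unfold lqTail
  split
  · exact iSup₂_le fun j hj => (h j hj).trans (le_iSup₂ (f := fun j _ => g j) j hj)
  · exact ENNReal.rpow_le_rpow
      (Finset.sum_le_sum fun j hj => ENNReal.rpow_le_rpow (h j hj) ENNReal.toReal_nonneg)
      (by positivity)

lemma lqTail_mono_set (q : ℝ≥0∞) (f : ℕ → ℝ≥0∞) {J J' N : ℕ} (h : J' ≤ J) :
    lqTail q f J N ≤ lqTail q f J' N := by
  have hss : Finset.Icc J N ⊆ Finset.Icc J' N := Finset.Icc_subset_Icc_left h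
  unfold lqTail
  split
  · exact iSup₂_le fun j hj => le_iSup₂ (f := fun j _ => f j) j (hss hj)
  · exact ENNReal.rpow_le_rpow
      (Finset.sum_le_sum_of_subset hss) (by positivity)

lemma lqTail_const_mul {q : ℝ≥0∞} (hq : 0 < q) (a : ℝ≥0∞) (f : ℕ → ℝ≥0∞) (J N : ℕ) :
    lqTail q (fun j => a * f j) J N = a * lqTail q f J N := by
  unfold lqTail
  split_ifs with h
  · simp only []
    simp_rw [ENNReal.mul_iSup]
  · have hqr : q.toReal ≠ 0 := ENNReal.toReal_ne_zero.2 ⟨hq.ne', h⟩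
    simp_rw [ENNReal.mul_rpow_of_nonneg _ _ ENNReal.toReal_nonneg, ← Finset.mul_sum]
    rw [ENNReal.mul_rpow_of_nonneg _ _ (by positivity), ← ENNReal.rpow_mul,
      mul_one_div_cancel hqr, ENNReal.rpow_one]

lemma two_rpow_add_comb (x y : ℝ) : (2:ℝ) ^ x * (2:ℝ) ^ y = (2:ℝ) ^ (x + y) :=
  (Real.rpow_add two_pos x y).symm

lemma key_upper {α r C B : ℝ} (hr : 0 ≤ r) (hC : 0 ≤ C) (J j : ℕ) (lam Mv : ℝ)
    (hlam : 0 ≤ lam) (hM0 : 0 ≤ Mv)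
    (hMu : Mv ≤ C * (2:ℝ) ^ (((j:ℝ) - (J:ℝ)) * α)) :
    (2:ℝ) ^ ((J:ℝ) * (α * r)) * ((2:ℝ) ^ ((j:ℝ) * B) * lam * Mv ^ r)
      ≤ C ^ r * ((2:ℝ) ^ ((j:ℝ) * (B + α * r)) * lam) := by
  have h1 : Mv ^ r ≤ C ^ r * (2:ℝ) ^ ((((j:ℝ) - (J:ℝ)) * α) * r) := by
    calc Mv ^ r ≤ (C * (2:ℝ) ^ (((j:ℝ) - (J:ℝ)) * α)) ^ r := Real.rpow_le_rpow hM0 hMu hr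
    _ = C ^ r * ((2:ℝ) ^ (((j:ℝ) - (J:ℝ)) * α)) ^ r :=
        Real.mul_rpow hC (Real.rpow_pos_of_pos two_pos _).le
    _ = _ := by rw [← Real.rpow_mul (by norm_num : (0:ℝ) ≤ 2)]
  calc (2:ℝ) ^ ((J:ℝ) * (α * r)) * ((2:ℝ) ^ ((j:ℝ) * B) * lam * Mv ^ r)
      ≤ (2:ℝ) ^ ((J:ℝ) * (α * r)) *
          ((2:ℝ) ^ ((j:ℝ) * B) * lam * (C ^ r * (2:ℝ) ^ ((((j:ℝ) - (J:ℝ)) * α) * r))) := by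
        gcongr
    _ = C ^ r * ((2:ℝ) ^ ((j:ℝ) * (B + α * r)) * lam) := by
        rw [show (j:ℝ) * (B + α * r) = (j:ℝ) * B + ((J:ℝ) * (α * r) + (((j:ℝ) - (J:ℝ)) * α) * r)
            by ring,
          ← two_rpow_add_comb, ← two_rpow_add_comb]
        ring

lemma key_lower {α r c B : ℝ} (hr : 0 ≤ r) (hc : 0 ≤ c) (J j : ℕ) (lam Mv : ℝ)
    (hlam : 0 ≤ lam)
    (hMl : c * (2:ℝ) ^ (((j:ℝ) - (J:ℝ)) * α) ≤ Mv) :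
    c ^ r * ((2:ℝ) ^ ((j:ℝ) * (B + α * r)) * lam)
      ≤ (2:ℝ) ^ ((J:ℝ) * (α * r)) * ((2:ℝ) ^ ((j:ℝ) * B) * lam * Mv ^ r) := by
  have h1 : c ^ r * (2:ℝ) ^ ((((j:ℝ) - (J:ℝ)) * α) * r) ≤ Mv ^ r := by
    calc c ^ r * (2:ℝ) ^ ((((j:ℝ) - (J:ℝ)) * α) * r)
        = (c * (2:ℝ) ^ (((j:ℝ) - (J:ℝ)) * α)) ^ r := by
          rw [Real.mul_rpow hc (Real.rpow_pos_of_pos two_pos _).le,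
            ← Real.rpow_mul (by norm_num : (0:ℝ) ≤ 2)]
    _ ≤ Mv ^ r := Real.rpow_le_rpow (by positivity) hMl hr
  calc c ^ r * ((2:ℝ) ^ ((j:ℝ) * (B + α * r)) * lam)
      = (2:ℝ) ^ ((J:ℝ) * (α * r)) *
          ((2:ℝ) ^ ((j:ℝ) * B) * lam * (c ^ r * (2:ℝ) ^ ((((j:ℝ) - (J:ℝ)) * α) * r))) := by
        rw [show (j:ℝ) * (B + α * r) = (j:ℝ) * B + ((J:ℝ) * (α * r) + (((j:ℝ) - (J:ℝ)) * α) * r)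
            by ring,
          ← two_rpow_add_comb, ← two_rpow_add_comb]
        ring
    _ ≤ _ := by
        gcongr

theorem stmt_17 (n : ℕ) (hn : 2 ≤ n) (α : ℝ) (hα0 : 0 < α) (hα1 : α < (n : ℝ) - 1)
    (p q : ℝ≥0∞) (hp : 0 < p) (hq : 0 < q) (s τ : ℝ)
    (hτ : τ = α * (p⁻¹).toReal / n) (j1 : ℕ)
    (M : ℕ → ℕ → ℕ) (c C : ℝ) (hc : 0 < c) (hC : 0 < C)
    (hM : ∀ J j : ℕ, J ≤ j →
      c * (2 : ℝ) ^ (((j : ℝ) - (J : ℝ)) * α) ≤ (M j J : ℝ) ∧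
      (M j J : ℝ) ≤ C * (2 : ℝ) ^ (((j : ℝ) - (J : ℝ)) * α)) :
    ∃ c' C' : ℝ, 0 < c' ∧ 0 < C' ∧
      ∀ N : ℕ, j1 ≤ N → ∀ lam : ℕ → ℝ, (∀ j, 0 ≤ lam j) →
        (ENNReal.ofReal c' *
            lqTail q (fun j => ENNReal.ofReal
              ((2 : ℝ) ^ ((j : ℝ) * (s + (n : ℝ) / 2 + n * τ - n * (p⁻¹).toReal)) * lam j))
              j1 N ≤
          ⨆ J ∈ Finset.Icc j1 N,
            ENNReal.ofReal ((2 : ℝ) ^ ((J : ℝ) * n * τ)) *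
              lqTail q (fun j => ENNReal.ofReal
                ((2 : ℝ) ^ ((j : ℝ) * (s + (n : ℝ) / 2 - n * (p⁻¹).toReal)) * lam j *
                  (M j J : ℝ) ^ (p⁻¹).toReal)) J N) ∧
        (⨆ J ∈ Finset.Icc j1 N,
            ENNReal.ofReal ((2 : ℝ) ^ ((J : ℝ) * n * τ)) *
              lqTail q (fun j => ENNReal.ofReal
                ((2 : ℝ) ^ ((j : ℝ) * (s + (n : ℝ) / 2 - n * (p⁻¹).toReal)) * lam j *
                  (M j J : ℝ) ^ (p⁻¹).toReal)) J N) ≤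
          ENNReal.ofReal C' *
            lqTail q (fun j => ENNReal.ofReal
              ((2 : ℝ) ^ ((j : ℝ) * (s + (n : ℝ) / 2 + n * τ - n * (p⁻¹).toReal)) * lam j))
              j1 N := by
  set r := (p⁻¹).toReal with hrdef
  have hr : 0 ≤ r := ENNReal.toReal_nonneg
  have hn0 : (n : ℝ) ≠ 0 := by positivity
  have hnτ : (n : ℝ) * τ = α * r := by rw [hτ]; field_simp
  have hE : s + (n : ℝ) / 2 + n * τ - n * r = (s + (n : ℝ) / 2 - n * r) + α * r := by
    rw [← hnτ]; ring
  have hexp : ∀ J : ℕ, (J : ℝ) * n * τ = (J : ℝ) * (α * r) := fun J => by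
    rw [mul_assoc, hnτ]
  refine ⟨c ^ r, C ^ r, Real.rpow_pos_of_pos hc r, Real.rpow_pos_of_pos hC r, ?_⟩
  intro N hN lam hlam
  simp only [hE, hexp]
  set B := s + (n : ℝ) / 2 - n * r with hB
  set t : ℕ → ℝ≥0∞ := fun j => ENNReal.ofReal ((2 : ℝ) ^ ((j : ℝ) * (B + α * r)) * lam j)
    with ht
  constructor
  · -- lower bound
    have hmem : j1 ∈ Finset.Icc j1 N := Finset.mem_Icc.2 ⟨le_refl _, hN⟩
    refine le_trans ?_ (le_iSup₂ (f := fun (J : ℕ) (_ : J ∈ Finset.Icc j1 N) =>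
      ENNReal.ofReal ((2 : ℝ) ^ ((J : ℝ) * (α * r))) *
        lqTail q (fun j => ENNReal.ofReal
          ((2 : ℝ) ^ ((j : ℝ) * B) * lam j * (M j J : ℝ) ^ r)) J N) j1 hmem)
    rw [← lqTail_const_mul hq, ← lqTail_const_mul hq]
    refine lqTail_mono_fun q fun j hj => ?_
    have hj1 : j1 ≤ j := (Finset.mem_Icc.1 hj).1
    rw [← ENNReal.ofReal_mul (by positivity), ← ENNReal.ofReal_mul
      (Real.rpow_pos_of_pos two_pos _).le]
    exact ENNReal.ofReal_le_ofReal
      (key_lower hr hc.le j1 j (lam j) _ (hlam j) (hM j1 j hj1).1)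
  · -- upper bound
    refine iSup₂_le fun J hJ => ?_
    have hJ1 : j1 ≤ J := (Finset.mem_Icc.1 hJ).1
    calc ENNReal.ofReal ((2 : ℝ) ^ ((J : ℝ) * (α * r))) *
          lqTail q (fun j => ENNReal.ofReal
            ((2 : ℝ) ^ ((j : ℝ) * B) * lam j * (M j J : ℝ) ^ r)) J N
        = lqTail q (fun j => ENNReal.ofReal ((2 : ℝ) ^ ((J : ℝ) * (α * r))) *
            ENNReal.ofReal ((2 : ℝ) ^ ((j : ℝ) * B) * lam j * (M j J : ℝ) ^ r)) J N :=
          (lqTail_const_mul hq _ _ _ _).symm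
      _ ≤ lqTail q (fun j => ENNReal.ofReal (C ^ r) * t j) J N := by
          refine lqTail_mono_fun q fun j hj => ?_
          have hJj : J ≤ j := (Finset.mem_Icc.1 hj).1
          rw [← ENNReal.ofReal_mul (Real.rpow_pos_of_pos two_pos _).le,
            ← ENNReal.ofReal_mul (by positivity)]
          exact ENNReal.ofReal_le_ofReal
            (key_upper hr hC.le J j (lam j) _ (hlam j) (Nat.cast_nonneg _) (hM J j hJj).2)
      _ = ENNReal.ofReal (C ^ r) * lqTail q t J N := lqTail_const_mul hq _ _ _ _
      _ ≤ ENNReal.ofReal (C ^ r) * lqTail q t j1 N :=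
          mul_le_mul_right (lqTail_mono_set q t hJ1) _
end
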